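/- arXiv:1705.10890 — 9 statements merged into one kernel-verified Lean document; each statement's English description precedes it below -/
import Mathlib

section
/- For every nonnegative integer n, every nonzero integer k, and every integer x, k divides lcm(n)·C(x+k, n) − lcm(n)·C(x, n). -/
/-- `lcm(n) := lcm{1,...,n}`, with `lcm(0) = 1`. -/
def lcmUpTo (n : ℕ) : ℕ := (Finset.Icc 1 n).lcm id

lemma smul_choose_int (k : ℤ) (j : ℕ) (hj : 1 ≤ j) :
    (j : ℤ) * Ring.choose k j = k * Ring.choose (k - 1) (j - 1) := by
  have h := Ring.choose_smul_choose k (n := j) (k := 1) hj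
  rw [Nat.choose_one_right, Ring.choose_one_right] at h
  rw [nsmul_eq_mul] at h
  push_cast at h ⊢
  exact h

lemma key_dvd (n : ℕ) (k : ℤ) (j : ℕ) (hj1 : 1 ≤ j) (hjn : j ≤ n) :
    k ∣ (lcmUpTo n : ℤ) * Ring.choose k j := by
  have hj : (j : ℕ) ∣ lcmUpTo n := Finset.dvd_lcm (by simp [Finset.mem_Icc]; omega)
  obtain ⟨m, hm⟩ := hj
  have heq : (lcmUpTo n : ℤ) * Ring.choose k j
      = (m : ℤ) * ((j : ℤ) * Ring.choose k j) := by
    have : (lcmUpTo n : ℤ) = (j : ℤ) * (m : ℤ) := by exact_mod_cast hm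
    rw [this]; ring
  rw [heq, smul_choose_int k j hj1]
  exact ⟨(m : ℤ) * Ring.choose (k - 1) (j - 1), by ring⟩

/-- For every `n : ℕ`, nonzero integer `k` and integer `x`,
`k` divides `lcm(n)·C(x+k, n) − lcm(n)·C(x, n)`. -/
theorem dvd_lcm_mul_choose_sub (n : ℕ) (k x : ℤ) (hk : k ≠ 0) :
    k ∣ (lcmUpTo n : ℤ) * Ring.choose (x + k) n - (lcmUpTo n : ℤ) * Ring.choose x n := by
  have hvdm := Ring.add_choose_eq (r := x) (s := k) n (Commute.all x k)
  have hmem : (n, 0) ∈ Finset.HasAntidiagonal.antidiagonal n := by simp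
  have hsum : ∑ ij ∈ Finset.HasAntidiagonal.antidiagonal n,
      (lcmUpTo n : ℤ) * (Ring.choose x ij.1 * Ring.choose k ij.2)
      = (lcmUpTo n : ℤ) * Ring.choose x n
        + ∑ ij ∈ (Finset.HasAntidiagonal.antidiagonal n).erase (n, 0),
            (lcmUpTo n : ℤ) * (Ring.choose x ij.1 * Ring.choose k ij.2) := by
    rw [← Finset.add_sum_erase _ _ hmem]
    simp [Ring.choose_zero_right]
  rw [hvdm, Finset.mul_sum, hsum, add_sub_cancel_left]
  refine Finset.dvd_sum ?_
  intro ij hij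
  have hmem' := Finset.mem_of_mem_erase hij
  have hne := Finset.ne_of_mem_erase hij
  rw [Finset.HasAntidiagonal.mem_antidiagonal] at hmem'
  rw [Ne, Prod.ext_iff] at hne
  push_neg at hne
  have hj1 : 1 ≤ ij.2 := by
    rcases Nat.eq_zero_or_pos ij.2 with h0 | h
    · exact absurd h0 (hne (by omega))
    · exact h
  have hjn : ij.2 ≤ n := by omega
  have := key_dvd n k ij.2 hj1 hjn
  rw [mul_comm (Ring.choose x ij.1), ← mul_assoc]
  exact Dvd.dvd.mul_right this _
end

section
/- For every nonnegative integer n, the function f_n : ℤ → ℤ given by f_n(x) = lcm(n)·C(x, n) preserves all congruences of (ℤ, +): for every nonnegative integer r and integers x, y, if x ≡ y (mod r) then f_n(x) ≡ f_n(y) (mod r). -/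
lemma r_dvd_lcm_mul_choose (n r k : ℕ) (hk1 : 1 ≤ k) (hkn : k ≤ n) :
    (r : ℤ) ∣ (lcmUpTo n : ℤ) * (Nat.choose r k : ℤ) := by
  have hkdvd : k ∣ lcmUpTo n := Finset.dvd_lcm (by simp [Finset.mem_Icc, hk1, hkn])
  obtain ⟨t, ht⟩ := hkdvd
  have hr : (r : ℤ) ∣ (k : ℤ) * (Nat.choose r k : ℤ) := by
    rcases r with _ | r'
    · rcases k with _ | k'
      · omega
      · simp
    · rcases k with _ | k'
      · omega
      · have h1 := congrArg (Nat.cast : ℕ → ℤ) (Nat.add_one_mul_choose_eq r' k')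
        push_cast at h1
        exact ⟨(Nat.choose r' k' : ℤ), by push_cast; linarith⟩

  obtain ⟨c, hc⟩ := hr
  exact ⟨t * c, by rw [ht]; push_cast; rw [mul_comm (k:ℤ) t, mul_assoc, hc]; ring⟩

lemma step (n r : ℕ) (x : ℤ) :
    (r : ℤ) ∣ (lcmUpTo n : ℤ) * Ring.choose (x + r) n - (lcmUpTo n : ℤ) * Ring.choose x n := by
  rw [Ring.add_choose_eq n (Commute.all x r)]
  rw [Finset.mul_sum]
  rw [← Finset.sum_erase_add _ _ (show (n, 0) ∈ Finset.HasAntidiagonal.antidiagonal n by simp)]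
  have h0 : (lcmUpTo n : ℤ) * (Ring.choose x (n,0).1 * Ring.choose (r:ℤ) (n,0).2)
      = (lcmUpTo n : ℤ) * Ring.choose x n := by
    simp [Ring.choose_zero_right]
  rw [h0, add_sub_cancel_right]
  refine Finset.dvd_sum ?_
  intro ij hij
  rw [Finset.mem_erase, Finset.HasAntidiagonal.mem_antidiagonal] at hij
  have h2 : 1 ≤ ij.2 := by
    rcases Nat.eq_zero_or_pos ij.2 with h | h
    · exfalso
      apply hij.1
      have h2 := hij.2
      obtain ⟨a, b⟩ := ij
      simp_all
    · exact h
  have h2n : ij.2 ≤ n := by omega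
  have : Ring.choose (r : ℤ) ij.2 = (Nat.choose r ij.2 : ℤ) := Ring.choose_natCast r ij.2
  rw [this]
  have := r_dvd_lcm_mul_choose n r ij.2 h2 h2n
  obtain ⟨c, hc⟩ := this
  exact ⟨c * Ring.choose x ij.1, by rw [show (lcmUpTo n : ℤ) * (Ring.choose x ij.1 * ↑(r.choose ij.2)) = ((lcmUpTo n : ℤ) * ↑(r.choose ij.2)) * Ring.choose x ij.1 by ring, hc]; ring⟩

/-- The function `f_n(x) = lcm(n)·C(x, n)` preserves all congruences of `(ℤ, +)`. -/
theorem lcm_mul_choose_preserves_congruences (n : ℕ) (r : ℕ) (x y : ℤ)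
    (h : (r : ℤ) ∣ x - y) :
    (r : ℤ) ∣ (lcmUpTo n : ℤ) * Ring.choose x n - (lcmUpTo n : ℤ) * Ring.choose y n := by
  obtain ⟨m, hm⟩ := h
  have hx : x = y + r * m := by linarith
  subst hx
  clear hm
  induction m using Int.induction_on with
  | zero => simp
  | succ k ih =>
    have hs := step n r (y + r * k)
    have : y + (r : ℤ) * (k + 1) = (y + r * k) + r := by ring
    rw [this]
    have := dvd_add hs ih
    simpa using this
  | pred k ih =>
    have hs := step n r (y + r * (-(k:ℤ) - 1))
    have : y + (r : ℤ) * (-(k:ℤ)) = (y + r * (-(k:ℤ)-1)) + r := by ring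
    rw [this] at ih
    have := dvd_sub ih hs
    simpa using this
end

section
/- Let λ be an integer and n a positive integer, and let f(x) := λ·C(x, n). If f preserves the congruences mod i for every i = 1, ..., n (i.e., x ≡ y (mod i) implies f(x) ≡ f(y) (mod i)), then λ is a multiple of lcm(n) = lcm{1, ..., n}. -/
/-- If `f(x) := λ·C(x, n)` preserves the congruences mod `i` for all `i = 1,...,n`,
then `λ` is a multiple of `lcm{1,...,n}`. -/
theorem lcm_dvd_of_preserves_congruences (lam : ℤ) (n : ℕ) (hn : 0 < n)
    (h : ∀ i ∈ Finset.Icc 1 n, ∀ x y : ℤ,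
      (i : ℤ) ∣ x - y → (i : ℤ) ∣ lam * Ring.choose x n - lam * Ring.choose y n) :
    (lcmUpTo n : ℤ) ∣ lam := by
  have key : ∀ i ∈ Finset.Icc 1 n, i ∣ lam.natAbs := by
    intro i hi
    obtain ⟨h1, h2⟩ := Finset.mem_Icc.mp hi
    have hd : (i : ℤ) ∣ (n : ℤ) - ((n - i : ℕ) : ℤ) := by
      have : ((n - i : ℕ) : ℤ) = (n : ℤ) - i := by
        push_cast [h2]; ring
      rw [this]; simp
    have := h i hi (n : ℤ) ((n - i : ℕ) : ℤ) hd
    rw [Ring.choose_natCast, Ring.choose_natCast, Nat.choose_self,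
      Nat.choose_eq_zero_of_lt (by omega)] at this
    simp at this
    exact Int.natCast_dvd_natCast.mp (Int.dvd_natAbs.mpr this)
  have : lcmUpTo n ∣ lam.natAbs := Finset.lcm_dvd key
  exact (Int.natCast_dvd_natCast.mpr this).trans (Int.natAbs_dvd.mpr dvd_rfl)
end

section
/- Let P(X) = Σ_{k=0}^{n} λ_k·C(X, k) with integer coefficients λ_k. If for all j, j' ∈ {0, 1, ..., n}, (j − j') divides P(j) − P(j'), then for each k, λ_k is a multiple of lcm(k) = lcm{1, ..., k}. -/
open Finset

lemma neg_one_pow_sub' {b j : ℕ} (h : j ≤ b) : (-1:ℤ)^(b-j) = (-1)^b * (-1)^j := by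
  conv_rhs => rw [← Nat.sub_add_cancel h, pow_add, mul_assoc, ← mul_pow]
  norm_num

lemma alt_sum (b : ℕ) :
    ∑ j ∈ range (b+1), (-1:ℤ)^(b-j) * (b.choose j) = if b = 0 then 1 else 0 := by
  have : ∀ j ∈ range (b+1), (-1:ℤ)^(b-j) * (b.choose j)
      = (-1)^b * ((-1)^j * (b.choose j)) := by
    intro j hj
    rw [neg_one_pow_sub' (mem_range_succ_iff.mp hj)]; ring
  rw [Finset.sum_congr rfl this, ← Finset.mul_sum, Int.alternating_sum_range_choose]
  split_ifs with hb
  · subst hb; norm_num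
  · ring

lemma delta (a t : ℕ) :
    ∑ i ∈ range (a+1), (-1:ℤ)^(a-i) * (a.choose i) * (i.choose t)
      = if t = a then 1 else 0 := by
  rcases le_or_gt t a with h | h
  · have h1 : ∀ i ∈ range (a+1), (-1:ℤ)^(a-i) * (a.choose i) * (i.choose t)
        = if t ≤ i then (a.choose t : ℤ) * ((-1)^(a-i) * ((a-t).choose (i-t))) else 0 := by
      intro i hi
      split_ifs with hti
      · have hc := Nat.choose_mul (n := a) hti
        have : ((a.choose i : ℤ)) * (i.choose t) = (a.choose t : ℤ) * ((a-t).choose (i-t)) := by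
          exact_mod_cast congrArg (Nat.cast (R := ℤ)) hc
        calc (-1:ℤ)^(a-i) * (a.choose i) * (i.choose t)
            = (-1:ℤ)^(a-i) * ((a.choose i : ℤ) * (i.choose t)) := by ring
          _ = (-1:ℤ)^(a-i) * ((a.choose t : ℤ) * ((a-t).choose (i-t))) := by rw [this]
          _ = (a.choose t : ℤ) * ((-1)^(a-i) * ((a-t).choose (i-t))) := by ring
      · rw [Nat.choose_eq_zero_of_lt (lt_of_not_ge hti)]; push_cast; ring
    rw [Finset.sum_congr rfl h1, Finset.sum_ite, Finset.sum_const_zero, add_zero]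
    have h2 : Finset.filter (fun i => t ≤ i) (range (a+1)) = Finset.Ico t (a+1) := by
      ext i; simp [Finset.mem_Ico]; omega
    rw [h2, ← Finset.mul_sum, Finset.sum_Ico_eq_sum_range]
    have h3 : a + 1 - t = (a - t) + 1 := by omega
    rw [h3]
    have h4 : ∀ j ∈ range ((a-t)+1), (-1:ℤ)^(a-(t+j)) * (((a-t)).choose ((t+j)-t))
        = (-1:ℤ)^((a-t)-j) * (((a-t)).choose j) := by
      intro j hj
      have e1 : t + j - t = j := by omega
      have e2 : a - (t+j) = (a-t) - j := by omega
      rw [e1, e2]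
    rw [Finset.sum_congr rfl h4, alt_sum]
    split_ifs with h5 h6 h6
    · simp [show t = a by omega]
    · omega
    · omega
    · ring
  · have h1 : ∀ i ∈ range (a+1), (-1:ℤ)^(a-i) * (a.choose i) * (i.choose t) = 0 := by
      intro i hi
      have hia := mem_range_succ_iff.mp hi
      rw [Nat.choose_eq_zero_of_lt (show i < t by omega)]
      push_cast; ring
    rw [Finset.sum_congr rfl h1, Finset.sum_const_zero, if_neg (by omega)]

lemma key (a m r : ℕ) :
    (∑ i ∈ range (a+1), ∑ t ∈ range (m+1),
      ((-1:ℤ)^(a-i) * (a.choose i)) * ((-1:ℤ)^(m-t) * (m.choose t)) * (((i+t).choose r : ℤ)))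
      = if r = a + m then 1 else 0 := by
  have hv : ∀ i t : ℕ, (((i+t).choose r : ℕ) : ℤ)
      = ∑ p ∈ range (r+1), ((i.choose p : ℤ)) * ((t.choose (r-p) : ℤ)) := by
    intro i t
    rw [Nat.add_choose_eq, Finset.Nat.sum_antidiagonal_eq_sum_range_succ_mk]
    push_cast
    rfl
  calc (∑ i ∈ range (a+1), ∑ t ∈ range (m+1),
      ((-1:ℤ)^(a-i) * (a.choose i)) * ((-1:ℤ)^(m-t) * (m.choose t)) * (((i+t).choose r : ℤ)))
      = ∑ i ∈ range (a+1), ∑ t ∈ range (m+1), ∑ p ∈ range (r+1),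
          ((-1:ℤ)^(a-i) * (a.choose i) * (i.choose p)) *
            ((-1:ℤ)^(m-t) * (m.choose t) * (t.choose (r-p))) := by
        refine Finset.sum_congr rfl fun i _ => Finset.sum_congr rfl fun t _ => ?_
        rw [hv, Finset.mul_sum]
        exact Finset.sum_congr rfl fun p _ => by ring
    _ = ∑ i ∈ range (a+1), ∑ p ∈ range (r+1), ∑ t ∈ range (m+1),
          ((-1:ℤ)^(a-i) * (a.choose i) * (i.choose p)) *
            ((-1:ℤ)^(m-t) * (m.choose t) * (t.choose (r-p))) := by
        exact Finset.sum_congr rfl fun i _ => Finset.sum_comm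
    _ = ∑ p ∈ range (r+1), ∑ i ∈ range (a+1), ∑ t ∈ range (m+1),
          ((-1:ℤ)^(a-i) * (a.choose i) * (i.choose p)) *
            ((-1:ℤ)^(m-t) * (m.choose t) * (t.choose (r-p))) := Finset.sum_comm
    _ = ∑ p ∈ range (r+1),
          (∑ i ∈ range (a+1), (-1:ℤ)^(a-i) * (a.choose i) * (i.choose p)) *
            (∑ t ∈ range (m+1), (-1:ℤ)^(m-t) * (m.choose t) * (t.choose (r-p))) := by
        exact Finset.sum_congr rfl fun p _ => (Finset.sum_mul_sum _ _ _ _).symm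
    _ = ∑ p ∈ range (r+1), (if p = a then (1:ℤ) else 0) * (if r - p = m then 1 else 0) := by
        exact Finset.sum_congr rfl fun p _ => by rw [delta, delta]
    _ = if r = a + m then 1 else 0 := by
        simp only [ite_mul, one_mul, zero_mul]
        rw [Finset.sum_ite_eq' (range (r+1)) a]
        simp only [Finset.mem_range]
        split_ifs <;> omega

/-- If `P = Σ λ_k·C(X,k)` satisfies `(j − j') ∣ P(j) − P(j')` for all `j, j' ∈ {0,...,n}`,
then each `λ_k` is a multiple of `lcm{1,...,k}`. -/
theorem coeffs_multiple_of_lcm (n : ℕ) (lam : ℕ → ℤ)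
    (h : ∀ j j' : ℕ, j ≤ n → j' ≤ n →
      ((j : ℤ) - (j' : ℤ)) ∣
        (∑ k ∈ Finset.range (n + 1), lam k * Ring.choose (j : ℤ) k) -
          (∑ k ∈ Finset.range (n + 1), lam k * Ring.choose (j' : ℤ) k)) :
    ∀ k ≤ n, (lcmUpTo k : ℤ) ∣ lam k := by
  simp only [Ring.choose_natCast] at h
  set F : ℕ → ℤ := fun j => ∑ r ∈ Finset.range (n+1), lam r * (j.choose r : ℤ) with hF
  intro k hk
  have hm : ∀ m, 1 ≤ m → m ≤ k → (m : ℤ) ∣ lam k := by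
    intro m hm1 hmk
    set a := k - m with ha
    have hS : ∀ i, i ≤ a → (m:ℤ) ∣ ∑ t ∈ range (m+1), (-1:ℤ)^(m-t) * (m.choose t) * F (i+t) := by
      intro i hia
      have hsplit : ∑ t ∈ range (m+1), (-1:ℤ)^(m-t) * (m.choose t) * F (i+t)
          = (∑ t ∈ range (m+1), (-1:ℤ)^(m-t) * (m.choose t) * (F (i+t) - F i))
            + (∑ t ∈ range (m+1), (-1:ℤ)^(m-t) * (m.choose t)) * F i := by
        rw [Finset.sum_mul, ← Finset.sum_add_distrib]
        exact Finset.sum_congr rfl fun t _ => by ring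
      rw [hsplit, alt_sum, if_neg (by omega), zero_mul, add_zero]
      apply Finset.dvd_sum
      intro t ht
      have htm := mem_range_succ_iff.mp ht
      rcases Nat.eq_zero_or_pos t with rfl | htpos
      · simp
      · have hdvd1 : ((t:ℤ)) ∣ (F (i+t) - F i) := by
          have := h (i+t) i (by omega) (by omega)
          simpa using this
        obtain ⟨d, hd⟩ := hdvd1
        have hmc : (m:ℤ) ∣ (m.choose t : ℤ) * t := by
          obtain ⟨q, hq⟩ : ∃ q, m = q + 1 := ⟨m-1, by omega⟩
          obtain ⟨s, hs⟩ : ∃ s, t = s + 1 := ⟨t-1, by omega⟩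
          refine ⟨(q.choose s : ℤ), ?_⟩
          have h2 := Nat.add_one_mul_choose_eq q s
          rw [hq, hs]
          exact_mod_cast h2.symm
        rw [hd]
        have e : (-1:ℤ)^(m-t) * (m.choose t) * ((t:ℤ)*d)
            = ((m.choose t : ℤ) * t) * ((-1)^(m-t) * d) := by ring
        rw [e]
        exact hmc.mul_right _
    have hid : lam k = ∑ i ∈ range (a+1), (-1:ℤ)^(a-i) * (a.choose i) *
        (∑ t ∈ range (m+1), (-1:ℤ)^(m-t) * (m.choose t) * F (i+t)) := by
      have e1 : ∀ i ∈ range (a+1), (-1:ℤ)^(a-i) * (a.choose i) *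
          (∑ t ∈ range (m+1), (-1:ℤ)^(m-t) * (m.choose t) * F (i+t))
          = ∑ t ∈ range (m+1), ∑ r ∈ range (n+1), lam r *
              (((-1:ℤ)^(a-i) * (a.choose i)) * ((-1:ℤ)^(m-t) * (m.choose t)) *
                (((i+t).choose r : ℤ))) := by
        intro i _
        rw [Finset.mul_sum]
        refine Finset.sum_congr rfl fun t _ => ?_
        rw [hF]
        simp only []
        rw [Finset.mul_sum, Finset.mul_sum]
        refine Finset.sum_congr rfl fun r _ => by ring
      rw [Finset.sum_congr rfl e1]
      have e2 : ∀ i ∈ range (a+1),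
          (∑ t ∈ range (m+1), ∑ r ∈ range (n+1), lam r *
              (((-1:ℤ)^(a-i) * (a.choose i)) * ((-1:ℤ)^(m-t) * (m.choose t)) *
                (((i+t).choose r : ℤ))))
          = ∑ r ∈ range (n+1), ∑ t ∈ range (m+1), lam r *
              (((-1:ℤ)^(a-i) * (a.choose i)) * ((-1:ℤ)^(m-t) * (m.choose t)) *
                (((i+t).choose r : ℤ))) := fun i _ => Finset.sum_comm
      rw [Finset.sum_congr rfl e2, Finset.sum_comm]
      have e3 : ∀ r ∈ range (n+1),
          (∑ i ∈ range (a+1), ∑ t ∈ range (m+1), lam r *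
              (((-1:ℤ)^(a-i) * (a.choose i)) * ((-1:ℤ)^(m-t) * (m.choose t)) *
                (((i+t).choose r : ℤ))))
          = lam r * (if r = a + m then 1 else 0) := by
        intro r _
        rw [← key a m r, Finset.mul_sum]
        exact Finset.sum_congr rfl fun i _ => by rw [Finset.mul_sum]
      rw [Finset.sum_congr rfl e3]
      have hak : a + m = k := by omega
      simp only [hak, mul_ite, mul_one, mul_zero]
      rw [Finset.sum_ite_eq' (range (n+1)) k]
      simp [Finset.mem_range, Nat.lt_succ_iff.mpr hk]
    rw [hid]
    exact Finset.dvd_sum fun i hi => ((hS i (mem_range_succ_iff.mp hi)).mul_left _)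
  have h1 : lcmUpTo k ∣ (lam k).natAbs := by
    apply Finset.lcm_dvd
    intro m hmem
    simp only [Finset.mem_Icc] at hmem
    exact Int.natCast_dvd.mp (hm m hmem.1 hmem.2)
  exact dvd_trans (Int.natCast_dvd_natCast.mpr h1) (Int.natAbs_dvd.mpr dvd_rfl)
end

section
/- The polynomial function g(x) := x²(x−1)²/2 maps ℤ to ℤ and preserves all congruences of (ℤ, +). -/
lemma half_eq (x m : ℤ) (h : x * (x - 1) = 2 * m) :
    x ^ 2 * (x - 1) ^ 2 / 2 = 2 * m ^ 2 := by
  have : x ^ 2 * (x - 1) ^ 2 = 2 * (2 * m ^ 2) := by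
    calc x ^ 2 * (x - 1) ^ 2 = (x * (x - 1)) ^ 2 := by ring
      _ = (2 * m) ^ 2 := by rw [h]
      _ = 2 * (2 * m ^ 2) := by ring
  rw [this, Int.mul_ediv_cancel_left _ (by norm_num)]

/-- The function `g(x) = x²(x−1)²/2` is integer valued and preserves all
congruences of `(ℤ, +)`. -/
theorem sq_mul_sq_div_two_preserves_congruences :
    (∀ x : ℤ, (2 : ℤ) ∣ x ^ 2 * (x - 1) ^ 2) ∧
      ∀ r : ℕ, ∀ x y : ℤ, (r : ℤ) ∣ x - y →
        (r : ℤ) ∣ x ^ 2 * (x - 1) ^ 2 / 2 - y ^ 2 * (y - 1) ^ 2 / 2 := by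
  constructor
  · intro x
    obtain ⟨m, hm⟩ := Int.even_mul_succ_self (x - 1)
    exact ⟨2 * m ^ 2, by nlinarith [hm]⟩
  · intro r x y hxy
    obtain ⟨m, hm⟩ := Int.even_mul_succ_self (x - 1)
    obtain ⟨n, hn⟩ := Int.even_mul_succ_self (y - 1)
    have hm' : x * (x - 1) = 2 * m := by linarith [hm]
    have hn' : y * (y - 1) = 2 * n := by linarith [hn]
    rw [half_eq x m hm', half_eq y n hn']
    have key : 2 * m ^ 2 - 2 * n ^ 2 = (x - y) * ((x + y - 1) * (m + n)) := by
      have h2 : 2 * (2 * m ^ 2 - 2 * n ^ 2) =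
          2 * ((x - y) * ((x + y - 1) * (m + n))) := by
        calc 2 * (2 * m ^ 2 - 2 * n ^ 2) = (2 * m) ^ 2 - (2 * n) ^ 2 := by ring
          _ = (x * (x - 1)) ^ 2 - (y * (y - 1)) ^ 2 := by rw [hm', hn']
          _ = (x - y) * ((x + y - 1) * (x * (x - 1) + y * (y - 1))) := by ring
          _ = (x - y) * ((x + y - 1) * (2 * m + 2 * n)) := by rw [hm', hn']
          _ = 2 * ((x - y) * ((x + y - 1) * (m + n))) := by ring
      exact mul_left_cancel₀ (by norm_num : (2:ℤ) ≠ 0) h2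
    rw [key]
    exact Dvd.dvd.mul_right hxy _
end

section
/- Every function f : A → ℤ defined on a finite set A ⊆ ℤ that preserves all congruences (i.e., (a − b) divides (f(a) − f(b)) for all a, b ∈ A) extends, for any given z ∈ ℤ \ A, to a function on A ∪ {z} with the same property. -/
/-- lattice distributivity consequence for Nat gcd/lcm. -/
lemma nat_gcd_lcm_dvd (u v n m : ℕ) (hu : Nat.gcd u n ∣ m) (hv : Nat.gcd v n ∣ m) :
    Nat.gcd (Nat.lcm u v) n ∣ m := by
  rcases eq_or_ne m 0 with rfl | hm
  · exact dvd_zero _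
  rcases eq_or_ne u 0 with rfl | hu0
  · simpa using hu
  rcases eq_or_ne v 0 with rfl | hv0
  · simpa using hv
  rcases eq_or_ne n 0 with rfl | hn0
  · simp only [Nat.gcd_zero_right] at hu hv ⊢
    exact Nat.lcm_dvd hu hv
  have hl : Nat.lcm u v ≠ 0 := Nat.lcm_ne_zero hu0 hv0
  have hg : Nat.gcd (Nat.lcm u v) n ≠ 0 := Nat.gcd_ne_zero_right hn0
  rw [← Nat.factorization_le_iff_dvd hg hm]
  rw [← Nat.factorization_le_iff_dvd (Nat.gcd_ne_zero_right hn0) hm] at hu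
  rw [← Nat.factorization_le_iff_dvd (Nat.gcd_ne_zero_right hn0) hm] at hv
  rw [Nat.factorization_gcd hu0 hn0] at hu
  rw [Nat.factorization_gcd hv0 hn0] at hv
  rw [Nat.factorization_gcd hl hn0, Nat.factorization_lcm hu0 hv0]
  rw [Finsupp.le_def] at hu hv ⊢
  intro p
  have h1 := hu p
  have h2 := hv p
  simp only [Finsupp.inf_apply, Finsupp.sup_apply] at *
  omega

lemma int_gcd_lcm_dvd (u v n m : ℤ) (hu : (Int.gcd u n : ℤ) ∣ m) (hv : (Int.gcd v n : ℤ) ∣ m) :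
    (Int.gcd (lcm u v) n : ℤ) ∣ m := by
  rw [Int.natCast_dvd] at hu hv ⊢
  have : Int.gcd (lcm u v) n = Nat.gcd (Nat.lcm u.natAbs v.natAbs) n.natAbs := by
    rw [← Int.coe_lcm]
    simp [Int.gcd, Int.lcm]
  rw [this]
  exact nat_gcd_lcm_dvd _ _ _ _ hu hv

lemma gcd_finset_lcm_dvd (s : Finset ℤ) (n : ℤ → ℤ) (w m : ℤ)
    (h : ∀ a ∈ s, (Int.gcd (n a) w : ℤ) ∣ m) : (Int.gcd (s.lcm n) w : ℤ) ∣ m := by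
  induction s using Finset.induction_on with
  | empty => simpa using one_dvd m
  | insert _ _ hc ih =>
    rename_i c s
    rw [Finset.lcm_insert]
    exact int_gcd_lcm_dvd _ _ _ _ (h c (Finset.mem_insert_self _ _))
      (ih fun a ha => h a (Finset.mem_insert_of_mem ha))

/-- finite CRT with compatibility condition. -/
lemma crt_finset (s : Finset ℤ) (n F : ℤ → ℤ)
    (h : ∀ a ∈ s, ∀ b ∈ s, (Int.gcd (n a) (n b) : ℤ) ∣ F a - F b) :
    ∃ x, ∀ a ∈ s, n a ∣ x - F a := by
  induction s using Finset.induction_on with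
  | empty => exact ⟨0, by simp⟩
  | insert _ _ hc ih =>
    rename_i c s
    obtain ⟨x, hx⟩ := ih fun a ha b hb =>
      h a (Finset.mem_insert_of_mem ha) b (Finset.mem_insert_of_mem hb)
    set L := s.lcm n with hL
    have hdL : ∀ a ∈ s, n a ∣ L := fun a ha => Finset.dvd_lcm ha
    have hcompat : (Int.gcd L (n c) : ℤ) ∣ x - F c := by
      apply gcd_finset_lcm_dvd
      intro a ha
      have h1 : (Int.gcd (n a) (n c) : ℤ) ∣ x - F a :=
        (Int.gcd_dvd_left _ _).trans (hx a ha)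
      have h2 : (Int.gcd (n a) (n c) : ℤ) ∣ F a - F c :=
        h a (Finset.mem_insert_of_mem ha) c (Finset.mem_insert_self _ _)
      have := dvd_add h1 h2
      simpa using this
    obtain ⟨k, hk⟩ := hcompat
    set d : ℤ := (Int.gcd L (n c) : ℤ) with hd
    set x' := x - k * Int.gcdA L (n c) * L with hx'
    refine ⟨x', ?_⟩
    intro a ha
    rcases Finset.mem_insert.mp ha with rfl | ha
    · -- n a = n c
      have hbez : d = L * Int.gcdA L (n a) + n a * Int.gcdB L (n a) :=
        Int.gcd_eq_gcd_ab L (n a)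
      have : x' - F a = k * ((n a) * Int.gcdB L (n a)) := by
        rw [hx']
        have : x - F a = d * k := hk
        rw [sub_sub, add_comm, ← sub_sub, this, hbez]
        ring
      rw [this]
      exact ⟨k * Int.gcdB L (n a), by ring⟩
    · have h1 : n a ∣ x - F a := hx a ha
      have h2 : n a ∣ k * Int.gcdA L (n c) * L := Dvd.dvd.mul_left (hdL a ha) _
      have : x' - F a = (x - F a) - k * Int.gcdA L (n c) * L := by rw [hx']; ring
      rw [this]
      exact dvd_sub h1 h2

/-- A congruence preserving map on a finite subset `A` of `ℤ` extends to any
additional point `z ∉ A`, keeping the congruence preservation. -/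
theorem extend_one_point (A : Finset ℤ) (f : ℤ → ℤ) (z : ℤ) (hz : z ∉ A)
    (h : ∀ a ∈ A, ∀ b ∈ A, (a - b) ∣ f a - f b) :
    ∃ g : ℤ → ℤ, (∀ a ∈ A, g a = f a) ∧
      ∀ a ∈ insert z A, ∀ b ∈ insert z A, (a - b) ∣ g a - g b := by
  obtain ⟨x, hx⟩ := crt_finset A (fun a => z - a) f (by
    intro a ha b hb
    have h1 : (Int.gcd (z - a) (z - b) : ℤ) ∣ (z - b) - (z - a) :=
      dvd_sub (Int.gcd_dvd_right _ _) (Int.gcd_dvd_left _ _)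
    have h2 : (z - b) - (z - a) = a - b := by ring
    rw [h2] at h1
    exact h1.trans (h a ha b hb))
  refine ⟨fun w => if w = z then x else f w, ?_, ?_⟩
  · intro a ha
    show (if a = z then x else f a) = f a
    exact if_neg (fun hh : a = z => hz (hh ▸ ha))
  · intro a ha b hb
    have hne : ∀ c ∈ A, c ≠ z := fun c hc hh => hz (hh ▸ hc)
    rcases Finset.mem_insert.mp ha with ha' | ha' <;>
      rcases Finset.mem_insert.mp hb with hb' | hb'
    · rw [ha', hb']; simp
    · rw [ha']
      show (z - b) ∣ (if z = z then x else f z) - (if b = z then x else f b)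
      rw [if_pos rfl, if_neg (hne b hb')]
      exact hx b hb'
    · rw [hb']
      show (a - z) ∣ (if a = z then x else f a) - (if z = z then x else f z)
      rw [if_neg (hne a ha'), if_pos rfl]
      have := hx a ha'
      rw [show a - z = -(z - a) by ring, show f a - x = -(x - f a) by ring]
      exact (neg_dvd.mpr this).neg_right
    · show (a - b) ∣ (if a = z then x else f a) - (if b = z then x else f b)
      rw [if_neg (hne a ha'), if_neg (hne b hb')]
      exact h a ha' b hb'
end

section
/- Every function f : A → ℤ on a finite set A ⊆ ℤ satisfying (a − b) | (f(a) − f(b)) for all a, b ∈ A extends to a total function F : ℤ → ℤ satisfying (x − y) | (F(x) − F(y)) for all x, y ∈ ℤ. -/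
noncomputable section ExtendAux

namespace ExtendAux

/-- `gcd x (lcm y z) ∣ lcm (gcd x y) (gcd x z)` over ℕ, via factorizations. -/
lemma nat_gcd_lcm_dvd (x y z : ℕ) :
    Nat.gcd x (Nat.lcm y z) ∣ Nat.lcm (Nat.gcd x y) (Nat.gcd x z) := by
  rcases eq_or_ne x 0 with rfl | hx
  · simp
  rcases eq_or_ne y 0 with rfl | hy
  · simpa [Nat.lcm_zero_left, Nat.gcd_zero_right] using Nat.dvd_lcm_left x (Nat.gcd x z)
  rcases eq_or_ne z 0 with rfl | hz
  · simpa [Nat.lcm_zero_right, Nat.gcd_zero_right] using Nat.dvd_lcm_right (Nat.gcd x y) x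
  have hgy : Nat.gcd x y ≠ 0 := fun h' => hx (Nat.gcd_eq_zero_iff.mp h').1
  have hgz : Nat.gcd x z ≠ 0 := fun h' => hx (Nat.gcd_eq_zero_iff.mp h').1
  have hlyz : Nat.lcm y z ≠ 0 := Nat.lcm_ne_zero hy hz
  have hL : Nat.gcd x (Nat.lcm y z) ≠ 0 := fun h' => hx (Nat.gcd_eq_zero_iff.mp h').1
  have hR : Nat.lcm (Nat.gcd x y) (Nat.gcd x z) ≠ 0 := Nat.lcm_ne_zero hgy hgz
  rw [← Nat.factorization_le_iff_dvd hL hR, Nat.factorization_gcd hx hlyz,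
    Nat.factorization_lcm hy hz, Nat.factorization_lcm hgy hgz,
    Nat.factorization_gcd hx hy, Nat.factorization_gcd hx hz]
  intro p
  simp only [Finsupp.inf_apply, Finsupp.sup_apply]
  exact le_of_eq (inf_sup_left _ _ _)

/-- Version over ℤ (with `lcm` the GCDMonoid lcm on ℤ). -/
lemma int_gcd_lcm_dvd {x y z m : ℤ} (h1 : (Int.gcd x y : ℤ) ∣ m)
    (h2 : (Int.gcd x z : ℤ) ∣ m) : (Int.gcd x (lcm y z) : ℤ) ∣ m := by
  have key := nat_gcd_lcm_dvd x.natAbs y.natAbs z.natAbs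
  have hl : Int.gcd x (lcm y z) = Nat.gcd x.natAbs (Nat.lcm y.natAbs z.natAbs) := by
    rw [Int.gcd, Int.natAbs_lcm, Int.lcm]
  rw [Int.natCast_dvd] at h1 h2 ⊢
  rw [hl]
  exact dvd_trans key (Nat.lcm_dvd h1 h2)

lemma gcd_finsetLcm_dvd (x m : ℤ) (nf : ℤ → ℤ) (s : Finset ℤ)
    (h : ∀ b ∈ s, (Int.gcd x (nf b) : ℤ) ∣ m) : (Int.gcd x (s.lcm nf) : ℤ) ∣ m := by
  induction s using Finset.induction_on with
  | empty => simp
  | @insert a s ha ih =>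
    rw [Finset.lcm_insert]
    exact int_gcd_lcm_dvd (h _ (Finset.mem_insert_self a s))
      (ih fun b hb => h b (Finset.mem_insert_of_mem hb))

/-- Two modulus CRT step, from Bézout. -/
lemma crt2 (m n c : ℤ) (h : (Int.gcd m n : ℤ) ∣ c) : ∃ t : ℤ, m ∣ t ∧ n ∣ t - c := by
  obtain ⟨k, hk⟩ := h
  refine ⟨m * Int.gcdA m n * k, ⟨Int.gcdA m n * k, by ring⟩, ⟨-(Int.gcdB m n * k), ?_⟩⟩
  rw [hk, Int.gcd_eq_gcd_ab]
  ring

/-- Finite CRT with compatible congruences. -/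
lemma crt (s : Finset ℤ) (nf tf : ℤ → ℤ)
    (h : ∀ a ∈ s, ∀ b ∈ s, (Int.gcd (nf a) (nf b) : ℤ) ∣ tf a - tf b) :
    ∃ v : ℤ, ∀ a ∈ s, nf a ∣ v - tf a := by
  induction s using Finset.induction_on with
  | empty => exact ⟨0, by simp⟩
  | @insert a s ha ih =>
    obtain ⟨v, hv⟩ :=
      ih fun x hx y hy => h _ (Finset.mem_insert_of_mem hx) _ (Finset.mem_insert_of_mem hy)
    have hg : (Int.gcd (nf a) (s.lcm nf) : ℤ) ∣ tf a - v := by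
      apply gcd_finsetLcm_dvd
      intro b hb
      have h1 : (Int.gcd (nf a) (nf b) : ℤ) ∣ tf a - tf b :=
        h _ (Finset.mem_insert_self a s) _ (Finset.mem_insert_of_mem hb)
      have h2 : (Int.gcd (nf a) (nf b) : ℤ) ∣ v - tf b :=
        dvd_trans (Int.gcd_dvd_right _ _) (hv b hb)
      have he : tf a - v = (tf a - tf b) - (v - tf b) := by ring
      rw [he]; exact dvd_sub h1 h2
    obtain ⟨t, htL, hta⟩ := crt2 (s.lcm nf) (nf a) (tf a - v) (by rwa [Int.gcd_comm])
    refine ⟨v + t, ?_⟩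
    intro b hb
    rcases Finset.mem_insert.mp hb with rfl | hb
    · have he : v + t - tf b = t - (tf b - v) := by ring
      rw [he]; exact hta
    · have he : v + t - tf b = (v - tf b) + t := by ring
      rw [he]; exact dvd_add (hv b hb) (dvd_trans (Finset.dvd_lcm hb) htL)

/-- An enumeration of ℤ. -/
def zE : ℕ ≃ ℤ := (Denumerable.eqv ℤ).symm

def target (A : Finset ℤ) (f : ℤ → ℤ) (g : ℕ → ℤ) (c : ℤ) : ℤ :=
  if c ∈ A then f c else g (zE.symm c)

def nextVal (A : Finset ℤ) (f : ℤ → ℤ) (g : ℕ → ℤ) (n : ℕ) : ℤ :=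
  if zE n ∈ A then f (zE n)
  else Classical.epsilon (fun v : ℤ =>
    ∀ c ∈ A ∪ (Finset.range n).image zE, (zE n - c) ∣ v - target A f g c)

def vals (A : Finset ℤ) (f : ℤ → ℤ) : ℕ → ℕ → ℤ
  | 0 => fun _ => 0
  | n + 1 => fun m => if m = n then nextVal A f (vals A f n) n else vals A f n m

def val (A : Finset ℤ) (f : ℤ → ℤ) (n : ℕ) : ℤ := vals A f (n + 1) n

def G (A : Finset ℤ) (f : ℤ → ℤ) (x : ℤ) : ℤ :=
  if x ∈ A then f x else val A f (zE.symm x)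

lemma val_eq (A : Finset ℤ) (f : ℤ → ℤ) (n : ℕ) :
    val A f n = nextVal A f (vals A f n) n := by
  simp [val, vals]

lemma vals_eq (A : Finset ℤ) (f : ℤ → ℤ) :
    ∀ n m, m < n → vals A f n m = val A f m := by
  intro n
  induction n with
  | zero => intro m hm; exact absurd hm (Nat.not_lt_zero m)
  | succ n ih =>
    intro m hm
    rcases eq_or_ne m n with rfl | hne
    · rfl
    · have hm' : m < n := lt_of_le_of_ne (Nat.lt_succ_iff.mp hm) hne
      calc vals A f (n + 1) m = vals A f n m := by simp [vals, hne]
        _ = val A f m := ih m hm'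

lemma invariant (A : Finset ℤ) (f : ℤ → ℤ)
    (h : ∀ a ∈ A, ∀ b ∈ A, (a - b) ∣ f a - f b) :
    ∀ n : ℕ, ∀ x y : ℤ, (x ∈ A ∨ zE.symm x < n) → (y ∈ A ∨ zE.symm y < n) →
      (x - y) ∣ G A f x - G A f y := by
  intro n
  induction n with
  | zero =>
    intro x y hx hy
    have hx' : x ∈ A := hx.resolve_right (Nat.not_lt_zero _)
    have hy' : y ∈ A := hy.resolve_right (Nat.not_lt_zero _)
    simpa [G, hx', hy'] using h x hx' y hy'
  | succ n ih =>
    have key : zE n ∉ A → ∀ y : ℤ, (y ∈ A ∨ zE.symm y < n) →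
        (zE n - y) ∣ G A f (zE n) - G A f y := by
      intro hA y hy
      set s : Finset ℤ := A ∪ (Finset.range n).image zE with hs
      have hmem : ∀ c ∈ s, (c ∈ A ∨ zE.symm c < n) := by
        intro c hc
        rcases Finset.mem_union.mp hc with h' | h'
        · exact Or.inl h'
        · obtain ⟨m, hm, rfl⟩ := Finset.mem_image.mp h'
          exact Or.inr (by rw [zE.symm_apply_apply]; exact Finset.mem_range.mp hm)
      have htG : ∀ c ∈ s, target A f (vals A f n) c = G A f c := by
        intro c hc
        by_cases hcA : c ∈ A
        · simp [target, G, hcA]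
        · have hc' : c ∈ (Finset.range n).image zE :=
            (Finset.mem_union.mp hc).resolve_left hcA
          obtain ⟨m, hm, rfl⟩ := Finset.mem_image.mp hc'
          simp [target, G, hcA, zE.symm_apply_apply,
            vals_eq A f n m (Finset.mem_range.mp hm)]
      have hex : ∃ v : ℤ, ∀ c ∈ s, (zE n - c) ∣ v - target A f (vals A f n) c := by
        apply crt s (fun c => zE n - c) (target A f (vals A f n))
        intro c hc c' hc'
        have hd : (Int.gcd (zE n - c) (zE n - c') : ℤ) ∣ c - c' := by
          have h1 : (Int.gcd (zE n - c) (zE n - c') : ℤ) ∣ (zE n - c) := Int.gcd_dvd_left _ _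
          have h2 : (Int.gcd (zE n - c) (zE n - c') : ℤ) ∣ (zE n - c') := Int.gcd_dvd_right _ _
          have he : c - c' = (zE n - c') - (zE n - c) := by ring
          rw [he]; exact dvd_sub h2 h1
        have hGG : (c - c') ∣ G A f c - G A f c' := ih c c' (hmem c hc) (hmem c' hc')
        rw [htG c hc, htG c' hc']
        exact dvd_trans hd hGG
      have hspec := Classical.epsilon_spec hex
      have hGn : G A f (zE n) = Classical.epsilon
          (fun v : ℤ => ∀ c ∈ s, (zE n - c) ∣ v - target A f (vals A f n) c) := by
        rw [show G A f (zE n) = val A f (zE.symm (zE n)) from if_neg hA,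
          zE.symm_apply_apply, val_eq]
        rw [nextVal, if_neg hA]
      have hyS : y ∈ s := by
        rcases hy with h' | h'
        · exact Finset.mem_union.mpr (Or.inl h')
        · refine Finset.mem_union.mpr (Or.inr (Finset.mem_image.mpr ⟨zE.symm y, ?_, ?_⟩))
          · exact Finset.mem_range.mpr h'
          · exact zE.apply_symm_apply y
      have := hspec y hyS
      rw [htG y hyS] at this
      rw [hGn]
      exact this
    intro x y hx hy
    by_cases hxn : x ∈ A ∨ zE.symm x < n
    · by_cases hyn : y ∈ A ∨ zE.symm y < n
      · exact ih x y hxn hyn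
      · push_neg at hyn
        have hyA : y ∉ A := hyn.1
        have hsy : zE.symm y = n := by
          have := hy.resolve_left hyA
          omega
        have hyE : y = zE n := by rw [← hsy, zE.apply_symm_apply]
        have hk := key (hyE ▸ hyA) x hxn
        rw [← hyE] at hk
        have he : x - y = -(y - x) := by ring
        rw [he]
        rw [show G A f x - G A f y = -(G A f y - G A f x) from by ring]
        exact (dvd_neg.mpr hk).neg_left
    · push_neg at hxn
      have hxA : x ∉ A := hxn.1
      have hsx : zE.symm x = n := by
        have := hx.resolve_left hxA
        omega
      have hxE : x = zE n := by rw [← hsx, zE.apply_symm_apply]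
      by_cases hyn : y ∈ A ∨ zE.symm y < n
      · have hk := key (hxE ▸ hxA) y hyn
        rw [← hxE] at hk
        exact hk
      · push_neg at hyn
        have hyA : y ∉ A := hyn.1
        have hsy : zE.symm y = n := by
          have := hy.resolve_left hyA
          omega
        have hyE : y = zE n := by rw [← hsy, zE.apply_symm_apply]
        rw [hxE, hyE, sub_self, sub_self]

end ExtendAux

end ExtendAux

/-- A congruence preserving map on a finite subset of `ℤ` extends to a total
congruence preserving map on `ℤ`. -/
theorem extend_to_total (A : Finset ℤ) (f : ℤ → ℤ)
    (h : ∀ a ∈ A, ∀ b ∈ A, (a - b) ∣ f a - f b) :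
    ∃ F : ℤ → ℤ, (∀ a ∈ A, F a = f a) ∧ ∀ x y : ℤ, (x - y) ∣ F x - F y := by
  refine ⟨ExtendAux.G A f, fun a ha => if_pos ha, fun x y => ?_⟩
  exact ExtendAux.invariant A f h (max (ExtendAux.zE.symm x) (ExtendAux.zE.symm y) + 1) x y
    (Or.inr (by omega)) (Or.inr (by omega))
end

section
/- Let V be a join-semilattice with least element 0 in which the residual x \\ y (least z with x ≤ y ∨ z) exists for all x, y. Then d_V(x,y) := (x \\ y) ∨ (y \\ x) is an ultrametric distance on V satisfying d_V(0,x) = x, and it is the least such distance: any ultrametric distance d on V with d(0,x) = x for all x satisfies d_V(x,y) ≤ d(x,y). -/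
/-- An ultrametric distance on `V` with values in `V` (a join-semilattice with
least element `⊥`). -/
def IsLatticeUltrametric {V : Type*} [SemilatticeSup V] [OrderBot V] (d : V → V → V) : Prop :=
  (∀ x y, d x y = ⊥ ↔ x = y) ∧ (∀ x y, d x y = d y x) ∧
    (∀ x y z, d x y ≤ d x z ⊔ d z y)

/-- If residuals exist in `V`, then `d_V(x,y) := (x \ y) ∨ (y \ x)` is an
ultrametric distance with `d_V(0,x) = x`, and it is the least such distance. -/
theorem residual_dist_is_least_ultrametric (V : Type*) [SemilatticeSup V] [OrderBot V]
    (res : V → V → V) (hres : ∀ x y : V, IsLeast {z : V | x ≤ y ⊔ z} (res x y)) :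
    IsLatticeUltrametric (fun x y : V => res x y ⊔ res y x) ∧
      (∀ x : V, res ⊥ x ⊔ res x ⊥ = x) ∧
      ∀ d : V → V → V, IsLatticeUltrametric d → (∀ x : V, d ⊥ x = x) →
        ∀ x y : V, res x y ⊔ res y x ≤ d x y := by
  have hmem : ∀ x y : V, x ≤ y ⊔ res x y := fun x y => (hres x y).1
  have hle : ∀ x y z : V, x ≤ y ⊔ z → res x y ≤ z := fun x y z h => (hres x y).2 h
  have htri : ∀ x y z : V, res x y ≤ res x z ⊔ res z y := by
    intro x y z
    apply hle
    calc x ≤ z ⊔ res x z := hmem x z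
      _ ≤ (y ⊔ res z y) ⊔ res x z := sup_le_sup_right (hmem z y) _
      _ = y ⊔ (res x z ⊔ res z y) := by ac_rfl
  refine ⟨⟨?_, ?_, ?_⟩, ?_, ?_⟩
  · intro x y
    constructor
    · intro h
      have h1 : res x y = ⊥ := le_bot_iff.mp (h ▸ le_sup_left)
      have h2 : res y x = ⊥ := le_bot_iff.mp (h ▸ le_sup_right)
      have := hmem x y; rw [h1, sup_bot_eq] at this
      have := hmem y x; rw [h2, sup_bot_eq] at this
      exact le_antisymm ‹x ≤ y› ‹y ≤ x›
    · rintro rfl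
      have : res x x ≤ ⊥ := hle x x ⊥ le_sup_left
      simp [le_bot_iff.mp this]
  · intro x y; exact sup_comm _ _
  · intro x y z
    show res x y ⊔ res y x ≤ (res x z ⊔ res z x) ⊔ (res z y ⊔ res y z)
    have h1 := htri x y z
    have h2 := htri y x z
    refine sup_le (h1.trans (sup_le ?_ ?_)) (h2.trans (sup_le ?_ ?_)) <;> first | exact le_sup_of_le_left le_sup_left | exact le_sup_of_le_left le_sup_right | exact le_sup_of_le_right le_sup_left | exact le_sup_of_le_right le_sup_right
  · intro x
    have h1 : res ⊥ x = ⊥ := le_bot_iff.mp (hle ⊥ x ⊥ (by simp))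
    have h2 : res x ⊥ = x := le_antisymm (hle x ⊥ x (by simp)) (by simpa using hmem x ⊥)
    simp [h1, h2]
  · rintro d ⟨hd0, hdsymm, hdtri⟩ hdb x y
    have key : ∀ a b : V, res a b ≤ d a b := by
      intro a b
      apply hle
      calc a = d ⊥ a := (hdb a).symm
        _ ≤ d ⊥ b ⊔ d b a := hdtri ⊥ a b
        _ = b ⊔ d a b := by rw [hdb, hdsymm]
    exact sup_le (key x y) ((key y x).trans (hdsymm y x).le)
end

section
/- In an algebraic lattice V in which residuals exist, the residual x \\ y of two compact elements x, y is compact. -/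
namespace CompleteLattice

/-- The December 2024 Mathlib definition of a compact element of a complete lattice
(the Mathlib name is gone; `IsCompactElement` now uses directed sets). -/
def IsCompactElement {α : Type*} [CompleteLattice α] (k : α) :=
  ∀ s : Set α, k ≤ sSup s → ∃ t : Finset α, ↑t ⊆ s ∧ k ≤ t.sup id

end CompleteLattice

/-- In an algebraic (compactly generated) complete lattice with residuals, the
residual of two compact elements is compact. -/
theorem residual_of_compact_is_compact (V : Type*) [CompleteLattice V]
    [IsCompactlyGenerated V] (res : V → V → V)
    (hres : ∀ x y : V, IsLeast {z : V | x ≤ y ⊔ z} (res x y))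
    (x y : V) (hx : CompleteLattice.IsCompactElement x)
    (hy : CompleteLattice.IsCompactElement y) :
    CompleteLattice.IsCompactElement (res x y) := by
  classical
  set r := res x y with hr
  set C : Set V := {c | CompleteLattice.IsCompactElement c ∧ c ≤ r} with hC
  have key : ∀ c : V, CompleteLattice.IsCompactElement c ↔ IsCompactElement c := fun c =>
    (CompleteLattice.isCompactElement_iff_exists_le_sSup_of_le_sSup (k := c)).symm
  have hrC : sSup C = r := by
    have h := sSup_compact_le_eq r
    simp only [← key] at h
    exact h
  have hxle : x ≤ sSup (insert y C) := by
    rw [sSup_insert, hrC]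
    exact (hres x y).1
  obtain ⟨t, hts, hxt⟩ := hx _ hxle
  -- t' := t.erase y ⊆ C
  have ht' : ∀ c ∈ t.erase y, c ∈ C := by
    intro c hc
    rcases Finset.mem_erase.mp hc with ⟨hne, hct⟩
    rcases hts hct with h | h
    · exact absurd h hne
    · exact h
  have hcomp : CompleteLattice.IsCompactElement ((t.erase y).sup id) :=
    (key _).2 (CompleteLattice.isCompactElement_finsetSup _ (fun c hc => (key _).1 (ht' c hc).1))
  have hle1 : r ≤ (t.erase y).sup id := by
    apply (hres x y).2
    show x ≤ y ⊔ _
    refine hxt.trans ?_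
    refine Finset.sup_le fun c hc => ?_
    by_cases h : c = y
    · subst h; exact le_sup_left
    · exact le_sup_of_le_right (Finset.le_sup (f := id) (Finset.mem_erase.mpr ⟨h, hc⟩))
  have hle2 : (t.erase y).sup id ≤ r :=
    Finset.sup_le fun c hc => (ht' c hc).2
  have : r = (t.erase y).sup id := le_antisymm hle1 hle2
  rw [this]
  exact hcomp
end
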